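/- Let E be a commutative integral domain with 1 and ν : E → ℕ a function satisfying the Euclidean algorithm property (for all s, d ∈ E with d ≠ 0 there exist q, r ∈ E with s = d·q + r and (r = 0 or ν(r) < ν(d))) and satisfying ν(a) ≤ ν(a·b) for all nonzero a, b ∈ E. Let B ∈ E be a nonzero nonunit and let d ∈ E be coprime to B (i.e. there exist x, y ∈ E with x·B + y·d = 1). Then for every k ∈ E the following are equivalent: (i) for all β, s₀ ∈ E with (s₀ = 0 or ν(s₀) < ν(B)), d divides B·β + s₀ if and only if d divides β + k·s₀; (ii) d divides B·k − 1. In particular, the element k with property (i) exists and is unique modulo d, namely k ≡ B^{-1} (mod d). -/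

import Mathlib

/-- Theorem on the reverse-test multiplier `k`: for `B` a nonzero nonunit and `d`
coprime to `B`, an element `k` satisfies the reverse divisibility test for all
digits iff `d ∣ B*k - 1`; moreover such a `k` exists and is unique modulo `d`. -/
theorem reverse_test_k_characterization {E : Type*} [CommRing E] [IsDomain E] (ν : E → ℕ)
    (hEA : ∀ s d : E, d ≠ 0 → ∃ q r : E, s = d * q + r ∧ (r = 0 ∨ ν r < ν d))
    (hmul : ∀ a b : E, a ≠ 0 → b ≠ 0 → ν a ≤ ν (a * b))
    (B d : E) (hB0 : B ≠ 0) (hBu : ¬IsUnit B)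
    (hcop : ∃ x y : E, x * B + y * d = 1) :
    (∀ k : E,
        (∀ β s₀ : E, (s₀ = 0 ∨ ν s₀ < ν B) →
          (d ∣ B * β + s₀ ↔ d ∣ β + k * s₀)) ↔ d ∣ B * k - 1) ∧
    (∃ k : E, d ∣ B * k - 1) ∧
    (∀ k k' : E, d ∣ B * k - 1 → d ∣ B * k' - 1 → d ∣ k - k') := by
  obtain ⟨x, y, hxy⟩ := hcop
  -- `1` is a digit: ν 1 < ν B
  have h1B : ν (1 : E) < ν B := by
    obtain ⟨q, r, hr, hro⟩ := hEA 1 B hB0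
    have hrne : r ≠ 0 := by
      rintro rfl
      exact hBu (IsUnit.of_mul_eq_one (a := B) q (by linear_combination -hr))
    have h1r : ν (1 : E) ≤ ν r := by
      have := hmul 1 r one_ne_zero hrne
      rwa [one_mul] at this
    exact lt_of_le_of_lt h1r (hro.resolve_left hrne)
  -- coprimality cancellation: d ∣ B*z → d ∣ z
  have hcancel : ∀ z : E, d ∣ B * z → d ∣ z := by
    intro z hz
    have hzeq : z = x * (B * z) + d * (y * z) := by linear_combination -z * hxy
    rw [hzeq]
    exact dvd_add (hz.mul_left x) (dvd_mul_right d (y * z))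
  -- d ∣ B*x - 1
  have hdx : d ∣ B * x - 1 := ⟨-y, by linear_combination hxy⟩
  refine ⟨?_, ⟨x, hdx⟩, ?_⟩
  · intro k
    constructor
    · intro htest
      have hdig : (1 : E) = 0 ∨ ν (1 : E) < ν B := Or.inr h1B
      have h1 : d ∣ B * (-x) + 1 := by
        have : B * (-x) + 1 = -(B * x - 1) := by ring
        rw [this]
        exact hdx.neg_right
      have h2 : d ∣ -x + k * 1 := (htest (-x) 1 hdig).mp h1
      -- d ∣ k - x, hence d ∣ B*(k-x), hence d ∣ B*k - 1
      have h3 : d ∣ B * (k - x) := by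
        have : B * (k - x) = B * (-x + k * 1) := by ring
        rw [this]
        exact h2.mul_left B
      have : B * k - 1 = B * (k - x) + (B * x - 1) := by ring
      rw [this]
      exact dvd_add h3 hdx
    · intro hk β s₀ _hdig
      constructor
      · intro h
        have hkx : d ∣ k - x := by
          apply hcancel
          have : B * (k - x) = (B * k - 1) - (B * x - 1) := by ring
          rw [this]
          exact dvd_sub hk hdx
        have : β + k * s₀ = x * (B * β + s₀) + (k - x) * s₀ - (B * x - 1) * β := by
          ring
        rw [this]
        exact dvd_sub (dvd_add (h.mul_left x) (hkx.mul_right s₀)) (hdx.mul_right β)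
      · intro h
        have : B * β + s₀ = B * (β + k * s₀) - (B * k - 1) * s₀ := by ring
        rw [this]
        exact dvd_sub (h.mul_left B) (hk.mul_right s₀)
  · intro k k' hk hk'
    apply hcancel
    have : B * (k - k') = (B * k - 1) - (B * k' - 1) := by ring
    rw [this]
    exact dvd_sub hk hk'
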